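/- Let Γ be the graph with vertex set M (as above) and an edge between B, C whenever d(B,C) = 1. If B, C ∈ M with d(B,C) = n, then there are exactly n! geodesic paths in Γ from B to C. -/

import Mathlib

open scoped Pointwise

/-- A subset `A` of a group `G` is `H`-finite if `A ⊆ H * F` for some finite `F`. -/
def HFin {G : Type*} [Group G] (H : Subgroup G) (A : Set G) : Prop :=
  ∃ F : Finset G, A ⊆ (H : Set G) * (F : Set G)

/-- The number of right cosets `Hg` meeting a set `A ⊆ G`. -/
noncomputable def cosetCount {G : Type*} [Group G] (H : Subgroup G) (A : Set G) : ℕ :=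
  Nat.card (Quotient.mk (QuotientGroup.rightRel H) '' A : Set _)

/-! ### Generic set lemmas -/

lemma sd_insert {α : Type*} {s : Set α} {x : α} (hx : x ∉ s) :
    symmDiff s {x} = insert x s := by
  ext y
  by_cases hy : y = x <;> simp [Set.mem_symmDiff, hy, hx]

lemma sd_insert' {α : Type*} {s : Set α} {x : α} (hx : x ∉ s) :
    symmDiff s (insert x s) = {x} := by
  rw [← sd_insert hx, symmDiff_symmDiff_cancel_left]

lemma sd_cancel {α : Type*} (a b c : Set α) :
    symmDiff (symmDiff a b) (symmDiff a c) = symmDiff b c := by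
  rw [symmDiff_comm a b, symmDiff_assoc, symmDiff_symmDiff_cancel_left]

lemma sd_tele {α : Type*} (a b c : Set α) :
    symmDiff (symmDiff a b) (symmDiff b c) = symmDiff a c := by
  rw [symmDiff_assoc, symmDiff_symmDiff_cancel_left]

/-! ### Coset quotient lemmas -/

section Aux
variable {G : Type*} [Group G] (H : Subgroup G)

local notation "π" => Quotient.mk (QuotientGroup.rightRel H)

lemma mk_mul_mem (h : G) (hh : h ∈ H) (g : G) : π (h * g) = π g := by
  refine Quotient.sound ?_
  show QuotientGroup.rightRel H (h*g) g
  rw [QuotientGroup.rightRel_apply]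
  simpa using hh

lemma inv_preimage (s : Set (Quotient (QuotientGroup.rightRel H))) :
    (H : Set G) * (π ⁻¹' s) = π ⁻¹' s := by
  ext g
  constructor
  · rintro ⟨h, hh, x, hx, rfl⟩
    simpa [Set.mem_preimage, mk_mul_mem H h hh x] using hx
  · intro hg
    exact ⟨1, H.one_mem, g, hg, one_mul g⟩

lemma eq_preimage_image {X : Set G} (hX : (H : Set G) * X = X) :
    π ⁻¹' (π '' X) = X := by
  ext g
  simp only [Set.mem_preimage, Set.mem_image]
  constructor
  · rintro ⟨x, hx, hxg⟩
    have : (QuotientGroup.rightRel H) g x := by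
      have := Quotient.exact hxg.symm
      exact this
    rw [QuotientGroup.rightRel_apply] at this
    have : g = (x * g⁻¹)⁻¹ * x := by group
    rw [← hX]
    exact this ▸ ⟨(x * g⁻¹)⁻¹, H.inv_mem ‹x * g⁻¹ ∈ H›, x, hx, rfl⟩
  · exact fun hg => ⟨g, hg, rfl⟩

lemma image_preimage (s : Set (Quotient (QuotientGroup.rightRel H))) :
    π '' (π ⁻¹' s) = s :=
  Set.image_preimage_eq s (Quotient.mk''_surjective)

lemma hfin_mono {X Y : Set G} (hXY : X ⊆ Y) (hY : HFin H Y) : HFin H X := by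
  obtain ⟨F, hF⟩ := hY; exact ⟨F, hXY.trans hF⟩

lemma hfin_union {X Y : Set G} (hX : HFin H X) (hY : HFin H Y) : HFin H (X ∪ Y) := by
  classical
  obtain ⟨F1, h1⟩ := hX; obtain ⟨F2, h2⟩ := hY
  refine ⟨F1 ∪ F2, ?_⟩
  rw [Finset.coe_union, Set.mul_union]
  exact Set.union_subset_union h1 h2

lemma hfin_symmDiff {X Y : Set G} (hX : HFin H X) (hY : HFin H Y) :
    HFin H (symmDiff X Y) :=
  hfin_mono H symmDiff_le_sup (hfin_union H hX hY)

lemma hfin_preimage {s : Set (Quotient (QuotientGroup.rightRel H))} (hs : s.Finite) :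
    HFin H (π ⁻¹' s) := by
  classical
  obtain ⟨t, rfl⟩ := Set.Finite.exists_finset_coe hs
  refine ⟨t.image Quotient.out, ?_⟩
  intro g hg
  simp only [Set.mem_preimage] at hg
  have hq : (π g : Quotient (QuotientGroup.rightRel H)).out ∈ (t.image Quotient.out : Finset _) :=
    Finset.mem_image_of_mem _ hg
  have hout : π ((π g).out) = π g := Quotient.out_eq _
  have : (QuotientGroup.rightRel H) g (π g).out := by
    have := Quotient.exact hout.symm; exact this
  rw [QuotientGroup.rightRel_apply] at this
  have hrepr : g = ((π g).out * g⁻¹)⁻¹ * (π g).out := by group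
  exact hrepr ▸ ⟨_, H.inv_mem this, _, by simpa using hq, rfl⟩

lemma image_finite_of_hfin {X : Set G} (hX : HFin H X) : (π '' X).Finite := by
  obtain ⟨F, hF⟩ := hX
  refine Set.Finite.subset ((F : Set G).toFinite.image π) ?_
  rintro _ ⟨g, hg, rfl⟩
  obtain ⟨h, hh, f, hf, rfl⟩ := hF hg
  exact ⟨f, hf, (mk_mul_mem H h hh f).symm⟩

lemma image_symmDiff {X Y : Set G} (hX : (H : Set G) * X = X) (hY : (H : Set G) * Y = Y) :
    π '' (symmDiff X Y) = symmDiff (π '' X) (π '' Y) := by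
  conv_lhs => rw [← eq_preimage_image H hX, ← eq_preimage_image H hY,
    ← Set.preimage_symmDiff, image_preimage]

lemma inv_symmDiff {X Y : Set G} (hX : (H : Set G) * X = X) (hY : (H : Set G) * Y = Y) :
    (H : Set G) * (symmDiff X Y) = symmDiff X Y := by
  have h : symmDiff X Y = π ⁻¹' (symmDiff (π '' X) (π '' Y)) := by
    conv_lhs => rw [← eq_preimage_image H hX, ← eq_preimage_image H hY, ← Set.preimage_symmDiff]
  rw [h, inv_preimage]

end Aux

/-! ### Generic combinatorics of toggling paths -/

def qset {Q : Type*} {n : ℕ} {T : Set Q} (e : Fin n ≃ ↥T) (i : Fin (n + 1)) : Set Q :=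
  (fun j : Fin n => (e j : Q)) '' {j : Fin n | (j : ℕ) < (i : ℕ)}

section QSet
variable {Q : Type*} {n : ℕ} {T : Set Q} (e : Fin n ≃ ↥T)

lemma qset_zero : qset e 0 = ∅ := by
  simp [qset]

lemma qset_last : qset e (Fin.last n) = T := by
  ext q
  simp only [qset, Fin.val_last, Set.mem_image, Set.mem_setOf_eq]
  constructor
  · rintro ⟨j, _, rfl⟩; exact (e j).2
  · intro hq
    exact ⟨e.symm ⟨q, hq⟩, (e.symm ⟨q, hq⟩).isLt, by simp⟩

lemma qset_finite (i : Fin (n + 1)) : (qset e i).Finite :=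
  Set.Finite.image _ (Set.toFinite _)

lemma not_mem_qset (i : Fin n) : (e i : Q) ∉ qset e i.castSucc := by
  rintro ⟨j, hj, hje⟩
  have : j = i := e.injective (Subtype.val_injective hje)
  subst this
  simp at hj

lemma qset_succ (i : Fin n) : qset e i.succ = insert (e i : Q) (qset e i.castSucc) := by
  ext q
  simp only [qset, Set.mem_image, Set.mem_setOf_eq, Fin.val_succ, Fin.coe_castSucc,
    Set.mem_insert_iff]
  constructor
  · rintro ⟨j, hj, rfl⟩
    rcases Nat.lt_succ_iff_lt_or_eq.mp hj with h | h
    · exact Or.inr ⟨j, h, rfl⟩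
    · have : j = i := Fin.ext h
      subst this
      exact Or.inl rfl
  · rintro (rfl | ⟨j, hj, rfl⟩)
    · exact ⟨i, Nat.lt_succ_self _, rfl⟩
    · exact ⟨j, Nat.lt_succ_of_lt hj, rfl⟩

lemma qset_sd (i : Fin n) :
    symmDiff (qset e i.castSucc) (qset e i.succ) = {(e i : Q)} := by
  rw [qset_succ e i, sd_insert' (not_mem_qset e i)]

end QSet

lemma tele_eq_qimage {Q : Type*} {n : ℕ} (t : Fin (n + 1) → Set Q) (q : Fin n → Q)
    (h0 : t 0 = ∅) (hstep : ∀ i : Fin n, t i.succ = symmDiff (t i.castSucc) {q i})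
    (hq : Function.Injective q) :
    ∀ i : Fin (n + 1), t i = q '' {j : Fin n | (j : ℕ) < (i : ℕ)} := by
  intro i
  induction i using Fin.induction with
  | zero => simp [h0]
  | succ i ih =>
    have hnm : q i ∉ q '' {j : Fin n | (j : ℕ) < (i.castSucc : ℕ)} := by
      rintro ⟨j, hj, hje⟩
      have : j = i := hq hje
      subst this
      simp at hj
    rw [hstep i, ih, sd_insert hnm]
    ext x
    simp only [Set.mem_insert_iff, Set.mem_image, Set.mem_setOf_eq, Fin.val_succ,
      Fin.coe_castSucc]
    constructor
    · rintro (rfl | ⟨j, hj, rfl⟩)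
      · exact ⟨i, Nat.lt_succ_self _, rfl⟩
      · exact ⟨j, Nat.lt_succ_of_lt hj, rfl⟩
    · rintro ⟨j, hj, rfl⟩
      rcases Nat.lt_succ_iff_lt_or_eq.mp hj with h | h
      · exact Or.inr ⟨j, h, rfl⟩
      · have : j = i := Fin.ext h
        subst this
        exact Or.inl rfl

lemma tele_subset_range {Q : Type*} {n : ℕ} (t : Fin (n + 1) → Set Q) (q : Fin n → Q)
    (h0 : t 0 = ∅) (hstep : ∀ i : Fin n, t i.succ = symmDiff (t i.castSucc) {q i}) :
    ∀ i : Fin (n + 1), t i ⊆ Set.range q := by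
  intro i
  induction i using Fin.induction with
  | zero => simp [h0]
  | succ i ih =>
    rw [hstep i]
    refine (symmDiff_le_sup : symmDiff (t i.castSucc) {q i} ≤ _).trans ?_
    exact Set.union_subset ih (by simp [Set.singleton_subset_iff])

/-- In the graph `Γ` on `M` where vertices at distance `1` are adjacent, there are
exactly `n!` geodesics joining `B` and `C` when `d(B,C) = n`.  A geodesic is a path
`B = p 0, p 1, …, p n = C` through `M` with consecutive vertices at distance `1`. -/
theorem stmt_13 {G : Type*} [Group G] (H : Subgroup G) (A : Set G)
    (hHA : (H : Set G) * A = A)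
    (hai : ∀ x : G, HFin H (symmDiff A ((fun a => a * x) '' A)))
    (M : Set (Set G))
    (hM : M = {B : Set G | (H : Set G) * B = B ∧ HFin H (symmDiff B A)})
    (d : Set G → Set G → ℕ) (hd : ∀ B C, d B C = cosetCount H (symmDiff B C))
    (B C : Set G) (hB : B ∈ M) (hC : C ∈ M) (n : ℕ) (hn : d B C = n) :
    Nat.card {p : Fin (n + 1) → Set G //
      p 0 = B ∧ p (Fin.last n) = C ∧ (∀ i, p i ∈ M) ∧
      ∀ i : Fin n, d (p i.castSucc) (p i.succ) = 1} = Nat.factorial n := by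
  classical
  subst hM
  obtain ⟨hBinv, hBA⟩ := hB
  obtain ⟨hCinv, hCA⟩ := hC
  have hSinv : (H : Set G) * symmDiff B C = symmDiff B C := inv_symmDiff H hBinv hCinv
  have hSfin : HFin H (symmDiff B C) := by
    have h1 : symmDiff (symmDiff B A) (symmDiff C A) = symmDiff B C := by
      rw [symmDiff_assoc, symmDiff_comm C A, symmDiff_symmDiff_cancel_left]
    rw [← h1]
    exact hfin_symmDiff H hBA hCA
  set T : Set (Quotient (QuotientGroup.rightRel H)) :=
    Quotient.mk (QuotientGroup.rightRel H) '' (symmDiff B C) with hT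
  have hTfin : T.Finite := image_finite_of_hfin H hSfin
  haveI : Fintype ↥T := hTfin.fintype
  have hTcard : Nat.card ↥T = n := by rw [← hn, hd B C]; rfl
  -- properties of the candidate paths
  have hp0 : ∀ e : Fin n ≃ ↥T,
      symmDiff B (Quotient.mk (QuotientGroup.rightRel H) ⁻¹' qset e 0) = B := by
    intro e
    rw [qset_zero, Set.preimage_empty]
    exact symmDiff_bot B
  have hplast : ∀ e : Fin n ≃ ↥T,
      symmDiff B (Quotient.mk (QuotientGroup.rightRel H) ⁻¹' qset e (Fin.last n)) = C := by
    intro e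
    rw [qset_last, hT, eq_preimage_image H hSinv, symmDiff_symmDiff_cancel_left]
  have hpmem : ∀ (e : Fin n ≃ ↥T) (i : Fin (n + 1)),
      symmDiff B (Quotient.mk (QuotientGroup.rightRel H) ⁻¹' qset e i) ∈
        {B : Set G | (H : Set G) * B = B ∧ HFin H (symmDiff B A)} := by
    intro e i
    refine ⟨inv_symmDiff H hBinv (inv_preimage H _), ?_⟩
    have h2 : symmDiff (symmDiff B (Quotient.mk (QuotientGroup.rightRel H) ⁻¹' qset e i)) A
        = symmDiff (symmDiff B A) (Quotient.mk (QuotientGroup.rightRel H) ⁻¹' qset e i) := by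
      rw [symmDiff_assoc, symmDiff_assoc,
        symmDiff_comm (Quotient.mk (QuotientGroup.rightRel H) ⁻¹' qset e i) A]
    rw [h2]
    exact hfin_symmDiff H hBA (hfin_preimage H (qset_finite e i))
  have hsd : ∀ (e : Fin n ≃ ↥T) (i : Fin n),
      symmDiff (symmDiff B (Quotient.mk (QuotientGroup.rightRel H) ⁻¹' qset e i.castSucc))
        (symmDiff B (Quotient.mk (QuotientGroup.rightRel H) ⁻¹' qset e i.succ))
      = Quotient.mk (QuotientGroup.rightRel H) ⁻¹' {(e i : Quotient (QuotientGroup.rightRel H))} := by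
    intro e i
    rw [sd_cancel, ← Set.preimage_symmDiff, qset_sd]
  have hpd : ∀ (e : Fin n ≃ ↥T) (i : Fin n),
      d (symmDiff B (Quotient.mk (QuotientGroup.rightRel H) ⁻¹' qset e i.castSucc))
        (symmDiff B (Quotient.mk (QuotientGroup.rightRel H) ⁻¹' qset e i.succ)) = 1 := by
    intro e i
    rw [hd, hsd e i]
    show Nat.card _ = 1
    rw [image_preimage H, Nat.card_coe_set_eq, Set.ncard_singleton]
  -- the bijection
  set F : (Fin n ≃ ↥T) → {p : Fin (n + 1) → Set G //
      p 0 = B ∧ p (Fin.last n) = C ∧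
      (∀ i, p i ∈ {B : Set G | (H : Set G) * B = B ∧ HFin H (symmDiff B A)}) ∧
      ∀ i : Fin n, d (p i.castSucc) (p i.succ) = 1} :=
    fun e => ⟨fun i => symmDiff B (Quotient.mk (QuotientGroup.rightRel H) ⁻¹' qset e i),
      hp0 e, hplast e, fun i => hpmem e i, fun i => hpd e i⟩ with hF
  have hFinj : Function.Injective F := by
    intro e1 e2 h
    have hpe := congrArg Subtype.val h
    simp only [hF] at hpe
    ext j
    have h1 := hsd e1 j
    have h2 := hsd e2 j
    rw [funext_iff] at hpe
    rw [hpe, hpe, h2] at h1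
    have h3 := congrArg (Set.image (Quotient.mk (QuotientGroup.rightRel H))) h1
    rw [image_preimage H, image_preimage H] at h3
    exact congrArg Subtype.val (Subtype.ext (Set.singleton_eq_singleton_iff.mp h3)).symm ▸ rfl
  have hFsurj : Function.Surjective F := by
    rintro ⟨p, h0, hlast, hmem, hstep⟩
    have hinv : ∀ i, (H : Set G) * p i = p i := fun i => (hmem i).1
    have hDcard : ∀ j : Fin n,
        (Quotient.mk (QuotientGroup.rightRel H) '' symmDiff (p j.castSucc) (p j.succ)).ncard
          = 1 := by
      intro j
      have h4 := hstep j
      rw [hd] at h4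
      rw [← Nat.card_coe_set_eq]
      exact h4
    choose q hq using fun j => Set.ncard_eq_one.mp (hDcard j)
    set t : Fin (n + 1) → Set (Quotient (QuotientGroup.rightRel H)) :=
      fun i => Quotient.mk (QuotientGroup.rightRel H) '' symmDiff B (p i) with ht
    have ht0 : t 0 = ∅ := by
      rw [ht]
      simp [h0, symmDiff_self]
    have htlast : t (Fin.last n) = T := by
      show Quotient.mk (QuotientGroup.rightRel H) '' symmDiff B (p (Fin.last n)) = T
      rw [hlast]
    have htstep : ∀ j : Fin n, t j.succ = symmDiff (t j.castSucc) {q j} := by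
      intro j
      have hrw : symmDiff B (p j.succ)
          = symmDiff (symmDiff B (p j.castSucc)) (symmDiff (p j.castSucc) (p j.succ)) :=
        (sd_tele _ _ _).symm
      rw [ht]
      simp only
      rw [hrw, image_symmDiff H (inv_symmDiff H hBinv (hinv _)) (inv_symmDiff H (hinv _) (hinv _)),
        hq j]
    have hsub : T ⊆ Set.range q := htlast ▸ tele_subset_range t q ht0 htstep (Fin.last n)
    have hrange_fin : (Set.range q).Finite := Set.finite_range q
    have hrange_le : (Set.range q).ncard ≤ n := by
      rw [← Set.image_univ]
      refine le_trans (Set.ncard_image_le Set.finite_univ) ?_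
      rw [Set.ncard_univ]
      simp [Nat.card_eq_fintype_card]
    have hTn : T.ncard = n := by rw [← Nat.card_coe_set_eq]; exact hTcard
    have hge : T.ncard ≤ (Set.range q).ncard := Set.ncard_le_ncard hsub hrange_fin
    rw [hTn] at hge
    have hreq : (Set.range q).ncard = n := le_antisymm hrange_le hge
    have hTrange : T = Set.range q :=
      Set.eq_of_subset_of_ncard_le hsub (by rw [hreq, hTn]) hrange_fin
    have hqinj : Function.Injective q := by
      rw [← Set.injOn_univ]
      refine Set.injOn_of_ncard_image_eq ?_ Set.finite_univ
      rw [Set.image_univ, hreq, Set.ncard_univ, Nat.card_eq_fintype_card, Fintype.card_fin]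
    have hqT : ∀ j, q j ∈ T := fun j => hTrange ▸ Set.mem_range_self j
    have hq'bij : Function.Bijective (fun j => (⟨q j, hqT j⟩ : ↥T)) := by
      rw [Fintype.bijective_iff_injective_and_card]
      constructor
      · intro a b hab
        exact hqinj (congrArg Subtype.val hab)
      · rw [Fintype.card_fin, ← Nat.card_eq_fintype_card, hTcard]
    refine ⟨Equiv.ofBijective _ hq'bij, ?_⟩
    apply Subtype.ext
    simp only [hF]
    funext i
    have h3 : p i = symmDiff B (Quotient.mk (QuotientGroup.rightRel H) ⁻¹' t i) := by
      rw [ht]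
      simp only
      rw [eq_preimage_image H (inv_symmDiff H hBinv (hinv i)), symmDiff_symmDiff_cancel_left]
    rw [h3]
    congr 1
    have h4 := tele_eq_qimage t q ht0 htstep hqinj i
    rw [h4]
    rfl
  have hbij : Function.Bijective F := ⟨hFinj, hFsurj⟩
  rw [← Nat.card_eq_of_bijective F hbij, Nat.card_eq_fintype_card,
    Fintype.card_equiv (Fintype.equivOfCardEq
      (by rw [Fintype.card_fin, ← Nat.card_eq_fintype_card, hTcard]))]
  rw [Fintype.card_fin]
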